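/- For n ≥ 4, R(F_n, F_n) ≥ ⌈9n/2⌉, where F_n = K_1 + nK_2 is the fan on 2n+1 vertices. -/

import Mathlib

open SimpleGraph

/-- `H` is contained in `G` as a subgraph. -/
def Contains {α β : Type*} (G : SimpleGraph α) (H : SimpleGraph β) : Prop :=
  ∃ f : H →g G, Function.Injective f

/-- Every red/blue coloring of `K_N` (red = `C`, blue = `Cᶜ`) has a red `G` or blue `H`. -/
def RamseyProp {α β : Type*} (N : ℕ) (G : SimpleGraph α) (H : SimpleGraph β) : Prop :=
  ∀ C : SimpleGraph (Fin N), Contains C G ∨ Contains Cᶜ H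

/-- The Ramsey number `R(G, H)`. -/
noncomputable def ramseyNumber {α β : Type*} (G : SimpleGraph α) (H : SimpleGraph β) : ℕ :=
  sInf {N | RamseyProp N G H}

/-- The join `G + H`: disjoint union plus all edges in between. -/
def graphJoin {α β : Type*} (G : SimpleGraph α) (H : SimpleGraph β) : SimpleGraph (α ⊕ β) :=
  SimpleGraph.fromRel (fun x y =>
    match x, y with
    | Sum.inl a, Sum.inl b => G.Adj a b
    | Sum.inr a, Sum.inr b => H.Adj a b
    | _, _ => True)

/-- The wheel `W_n = K_1 + C_{n-1}` on `n` vertices. -/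
def wheel (n : ℕ) : SimpleGraph (Fin 1 ⊕ Fin (n - 1)) :=
  graphJoin ⊥ (SimpleGraph.cycleGraph (n - 1))

/-- A perfect matching `k • K_2` on `2k` vertices. -/
def matching (k : ℕ) : SimpleGraph (Fin k × Fin 2) :=
  SimpleGraph.fromRel (fun x y => x.1 = y.1)

/-- The fan `F_k = K_1 + k • K_2`. -/
def fan (k : ℕ) : SimpleGraph (Fin 1 ⊕ Fin k × Fin 2) :=
  graphJoin ⊥ (matching k)

/-- The kipas `K̂_n = K_1 + P_{n-1}` on `n` vertices. -/
def kipas (n : ℕ) : SimpleGraph (Fin 1 ⊕ Fin (n - 1)) :=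
  graphJoin ⊥ (SimpleGraph.pathGraph (n - 1))

/-- The blow-up `G[K_2]`: each vertex replaced by an adjacent pair; vertices in
different pairs adjacent iff the original vertices are adjacent. -/
def blowUp {α : Type*} (G : SimpleGraph α) : SimpleGraph (α × Fin 2) :=
  SimpleGraph.fromRel (fun x y => x.1 = y.1 ∨ G.Adj x.1 y.1)



section Aux

open Finset

/-! ### The lower-bound coloring -/

/-- part index of a vertex (value) for the 5-part construction. -/
def pt (n v : ℕ) : ℕ :=
  if v < (n-1)/2 then 0
  else if v < (n-1)/2 + (n-1) then 1
  else if v < (n-1)/2 + (n-1) + n/2 then 2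
  else if v < (n-1)/2 + 2*n then 3
  else 4

/-- red pattern between parts. -/
def Rpat (i j : ℕ) : Prop := i = j ∨ (i ≤ 1 ∧ 2 ≤ j ∧ j ≤ 3) ∨ (j ≤ 1 ∧ 2 ≤ i ∧ i ≤ 3)

lemma Rpat_symm {i j : ℕ} (h : Rpat i j) : Rpat j i := by
  unfold Rpat at *; omega

lemma pt_le (n v : ℕ) : pt n v ≤ 4 := by
  unfold pt; split_ifs <;> omega

/-- the red coloring on `Fin k`. -/
def Cg (n k : ℕ) : SimpleGraph (Fin k) where
  Adj x y := x ≠ y ∧ Rpat (pt n x.val) (pt n y.val)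
  symm := by
    refine ⟨?_⟩
    rintro x y ⟨h1, h2⟩
    exact ⟨h1.symm, Rpat_symm h2⟩
  loopless := by refine ⟨?_⟩; rintro x ⟨h1, _⟩; exact h1 rfl

lemma fan_adj_hub (n : ℕ) (p : Fin n × Fin 2) :
    (fan n).Adj (Sum.inl 0) (Sum.inr p) := by
  unfold fan graphJoin
  rw [SimpleGraph.fromRel_adj]
  exact ⟨by simp, Or.inl trivial⟩

lemma fan_adj_match (n : ℕ) (p : Fin n) :
    (fan n).Adj (Sum.inr (p, 0)) (Sum.inr (p, 1)) := by
  unfold fan graphJoin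
  rw [SimpleGraph.fromRel_adj]
  refine ⟨by simp, Or.inl ?_⟩
  show (matching n).Adj (p, 0) (p, 1)
  unfold matching
  rw [SimpleGraph.fromRel_adj]
  exact ⟨by simp, Or.inl rfl⟩

lemma count_aux {k : ℕ} (T : Finset (Fin k)) (l1 h1 l2 h2 : ℕ)
    (hm : ∀ x ∈ T, (x : ℕ) ∈ Finset.Ico l1 h1 ∪ Finset.Ico l2 h2) :
    T.card ≤ (h1 - l1) + (h2 - l2) := by
  calc T.card ≤ (Finset.Ico l1 h1 ∪ Finset.Ico l2 h2).card :=
        Finset.card_le_card_of_injOn (fun x => (x : ℕ)) hm Fin.val_injective.injOn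
    _ ≤ (h1 - l1) + (h2 - l2) := by
        refine (Finset.card_union_le _ _).trans ?_
        simp [Nat.card_Ico]

lemma noRed (n k : ℕ) (hn : 4 ≤ n) (hk : k ≤ 4*n + (n-1)/2) :
    ¬ Contains (Cg n k) (fan n) := by
  classical
  rintro ⟨f, hf⟩
  set h0 : Fin k := f (Sum.inl 0) with hh0
  set i : ℕ := pt n h0.val with hi0
  have hi : i ≤ 4 := pt_le n h0.val
  set T : Finset (Fin k) :=
    insert h0 (Finset.univ.image fun p : Fin n × Fin 2 => f (Sum.inr p)) with hT
  have hinj : Function.Injective (fun p : Fin n × Fin 2 => f (Sum.inr p)) := by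
    intro a b hab
    have := hf hab
    exact Sum.inr_injective this
  have hnotmem : h0 ∉ Finset.univ.image fun p : Fin n × Fin 2 => f (Sum.inr p) := by
    simp only [Finset.mem_image]
    rintro ⟨p, _, hp⟩
    have := hf hp
    simp at this
  have hTcard : T.card = 2*n + 1 := by
    rw [hT, Finset.card_insert_of_notMem hnotmem,
      Finset.card_image_of_injective _ hinj]
    simp [mul_comm]
  have hTmem : ∀ x ∈ T, Rpat (pt n x.val) i := by
    intro x hx
    rw [hT, Finset.mem_insert] at hx
    rcases hx with rfl | hx
    · exact Or.inl rfl
    · simp only [Finset.mem_image] at hx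
      obtain ⟨p, _, rfl⟩ := hx
      have hadj : (Cg n k).Adj h0 (f (Sum.inr p)) := f.map_adj (fan_adj_hub n p)
      exact Rpat_symm hadj.2
  -- now count
  have key : ∀ (l1 h1 l2 h2 : ℕ),
      (∀ x ∈ T, (x : ℕ) ∈ Finset.Ico l1 h1 ∪ Finset.Ico l2 h2) →
      2*n + 1 ≤ (h1 - l1) + (h2 - l2) := by
    intro l1 h1 l2 h2 hm
    have := count_aux T l1 h1 l2 h2 hm
    omega
  have hmem : ∀ x ∈ T, Rpat (pt n x.val) i := hTmem
  interval_cases i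
  · have := key 0 ((n-1)/2) ((n-1)/2 + (n-1)) ((n-1)/2 + 2*n) ?_
    · omega
    · intro x hx
      have hr := hmem x hx
      have hv := x.isLt
      simp only [Finset.mem_union, Finset.mem_Ico]
      unfold pt at hr
      split_ifs at hr <;> unfold Rpat at hr <;> omega
  · have := key ((n-1)/2) ((n-1)/2 + 2*n) 0 0 ?_
    · omega
    · intro x hx
      have hr := hmem x hx
      have hv := x.isLt
      simp only [Finset.mem_union, Finset.mem_Ico]
      unfold pt at hr
      split_ifs at hr <;> unfold Rpat at hr <;> omega
  · have := key 0 ((n-1)/2 + (n-1) + n/2) 0 0 ?_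
    · omega
    · intro x hx
      have hr := hmem x hx
      have hv := x.isLt
      simp only [Finset.mem_union, Finset.mem_Ico]
      unfold pt at hr
      split_ifs at hr <;> unfold Rpat at hr <;> omega
  · have := key 0 ((n-1)/2 + (n-1)) ((n-1)/2 + (n-1) + n/2) ((n-1)/2 + 2*n) ?_
    · omega
    · intro x hx
      have hr := hmem x hx
      have hv := x.isLt
      simp only [Finset.mem_union, Finset.mem_Ico]
      unfold pt at hr
      split_ifs at hr <;> unfold Rpat at hr <;> omega
  · have := key ((n-1)/2 + 2*n) (4*n + (n-1)/2) 0 0 ?_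
    · omega
    · intro x hx
      have hr := hmem x hx
      have hv := x.isLt
      simp only [Finset.mem_union, Finset.mem_Ico]
      unfold pt at hr
      split_ifs at hr <;> unfold Rpat at hr <;> omega

/-- cover pattern for the blue side. -/
def cov (i j : ℕ) : Prop :=
  (i = 0 ∧ j = 1) ∨ (i = 1 ∧ j = 0) ∨ (i = 2 ∧ j = 3) ∨ (i = 3 ∧ j = 2) ∨
    (i = 4 ∧ (j = 0 ∨ j = 2))

instance Rpat.dec : ∀ i j, Decidable (Rpat i j) := fun i j => by
  unfold Rpat; infer_instance

instance cov.dec : ∀ i j, Decidable (cov i j) := fun i j => by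
  unfold cov; infer_instance

lemma cov_key {i a b : ℕ} (hi : i ≤ 4) (ha : a ≤ 4) (hb : b ≤ 4)
    (h1 : ¬ Rpat i a) (h2 : ¬ Rpat i b) (h3 : ¬ Rpat a b) :
    cov i a ∨ cov i b := by
  have H : ∀ i a b : Fin 5, ¬ Rpat i.val a.val → ¬ Rpat i.val b.val →
      ¬ Rpat a.val b.val → cov i.val a.val ∨ cov i.val b.val := by decide
  exact H ⟨i, by omega⟩ ⟨a, by omega⟩ ⟨b, by omega⟩ h1 h2 h3

lemma noBlue (n k : ℕ) (hn : 4 ≤ n) (hk : k ≤ 4*n + (n-1)/2) :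
    ¬ Contains (Cg n k)ᶜ (fan n) := by
  classical
  rintro ⟨f, hf⟩
  set h0 : Fin k := f (Sum.inl 0) with hh0
  set i : ℕ := pt n h0.val with hi0
  have hi : i ≤ 4 := pt_le n h0.val
  set D : Finset (Fin k) := Finset.univ.filter (fun x => cov i (pt n x.val)) with hD
  have hblue : ∀ x y : Fin 1 ⊕ Fin n × Fin 2, (fan n).Adj x y →
      ¬ Rpat (pt n (f x).val) (pt n (f y).val) := by
    intro x y hxy
    have hadj : (Cg n k)ᶜ.Adj (f x) (f y) := f.map_adj hxy
    rw [SimpleGraph.compl_adj] at hadj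
    intro hR
    exact hadj.2 ⟨hadj.1, hR⟩
  have key1 : ∀ p : Fin n, f (Sum.inr (p, 0)) ∈ D ∨ f (Sum.inr (p, 1)) ∈ D := by
    intro p
    have h1 := hblue _ _ (fan_adj_hub n (p, 0))
    have h2 := hblue _ _ (fan_adj_hub n (p, 1))
    have h3 := hblue _ _ (fan_adj_match n p)
    have := cov_key hi (pt_le n _) (pt_le n _) h1 h2 h3
    rcases this with h | h
    · left; rw [hD]; simp [h]
    · right; rw [hD]; simp [h]
  set g : Fin n → Fin k := fun p =>
    if f (Sum.inr (p, 0)) ∈ D then f (Sum.inr (p, 0)) else f (Sum.inr (p, 1)) with hg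
  have hgD : ∀ p, g p ∈ D := by
    intro p
    rw [hg]
    by_cases hc : f (Sum.inr (p, 0)) ∈ D
    · simpa [hc]
    · rcases key1 p with h | h
      · exact absurd h hc
      · simpa [hc]
  have hgor : ∀ p, g p = f (Sum.inr (p, 0)) ∨ g p = f (Sum.inr (p, 1)) := by
    intro p
    rw [hg]
    by_cases hc : f (Sum.inr (p, 0)) ∈ D <;> simp [hc]
  have hginj : ∀ p ∈ (Finset.univ : Finset (Fin n)), ∀ q ∈ (Finset.univ : Finset (Fin n)),
      g p = g q → p = q := by
    intro p _ q _ hpq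
    rcases hgor p with hp | hp <;> rcases hgor q with hq | hq <;>
    · rw [hp, hq] at hpq
      have := hf hpq
      simp only [Sum.inr.injEq, Prod.mk.injEq] at this
      exact this.1
  have hcard : n ≤ D.card := by
    have := Finset.card_le_card_of_injOn g (fun p _ => hgD p) hginj
    simpa using this
  -- now bound D.card by cases on i
  have hDmem : ∀ x ∈ D, cov i (pt n x.val) := by
    intro x hx
    rw [hD, Finset.mem_filter] at hx
    exact hx.2
  interval_cases i
  · have := count_aux D ((n-1)/2) ((n-1)/2 + (n-1)) 0 0 ?_
    · omega
    · intro x hx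
      have hr := hDmem x hx
      have hv := x.isLt
      simp only [Finset.mem_union, Finset.mem_Ico]
      unfold pt at hr
      split_ifs at hr <;> unfold cov at hr <;> omega
  · have := count_aux D 0 ((n-1)/2) 0 0 ?_
    · omega
    · intro x hx
      have hr := hDmem x hx
      have hv := x.isLt
      simp only [Finset.mem_union, Finset.mem_Ico]
      unfold pt at hr
      split_ifs at hr <;> unfold cov at hr <;> omega
  · have := count_aux D ((n-1)/2 + (n-1) + n/2) ((n-1)/2 + 2*n) 0 0 ?_
    · omega
    · intro x hx
      have hr := hDmem x hx
      have hv := x.isLt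
      simp only [Finset.mem_union, Finset.mem_Ico]
      unfold pt at hr
      split_ifs at hr <;> unfold cov at hr <;> omega
  · have := count_aux D ((n-1)/2 + (n-1)) ((n-1)/2 + (n-1) + n/2) 0 0 ?_
    · omega
    · intro x hx
      have hr := hDmem x hx
      have hv := x.isLt
      simp only [Finset.mem_union, Finset.mem_Ico]
      unfold pt at hr
      split_ifs at hr <;> unfold cov at hr <;> omega
  · have := count_aux D 0 ((n-1)/2) ((n-1)/2 + (n-1)) ((n-1)/2 + (n-1) + n/2) ?_
    · omega
    · intro x hx
      have hr := hDmem x hx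
      have hv := x.isLt
      simp only [Finset.mem_union, Finset.mem_Ico]
      unfold pt at hr
      split_ifs at hr <;> unfold cov at hr <;> omega

/-! ### Ramsey existence -/

lemma ramsey_exists : ∀ s t : ℕ, ∃ M : ℕ,
    ∀ (V : Type) [Fintype V] [DecidableEq V] (C : SimpleGraph V),
      M ≤ Fintype.card V →
      (∃ S : Finset V, S.card = s ∧ ∀ x ∈ S, ∀ y ∈ S, x ≠ y → C.Adj x y) ∨
      (∃ S : Finset V, S.card = t ∧ ∀ x ∈ S, ∀ y ∈ S, x ≠ y → ¬ C.Adj x y) := by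
  intro s
  induction s with
  | zero =>
    intro t
    exact ⟨0, fun V _ _ C _ => Or.inl ⟨∅, by simp⟩⟩
  | succ s ihs =>
    intro t
    induction t with
    | zero =>
      exact ⟨0, fun V _ _ C _ => Or.inr ⟨∅, by simp⟩⟩
    | succ t iht =>
      obtain ⟨M1, h1⟩ := ihs (t + 1)
      obtain ⟨M2, h2⟩ := iht
      refine ⟨M1 + M2 + 1, ?_⟩
      intro V _ _ C hcard
      classical
      have hne : Nonempty V := by
        rw [← Fintype.card_pos_iff]; omega
      obtain ⟨v⟩ := hne
      set A : Finset V := Finset.univ.filter (fun x => C.Adj v x) with hA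
      set B : Finset V := Finset.univ.filter (fun x => x ≠ v ∧ ¬ C.Adj v x) with hB
      have hsub : (Finset.univ : Finset V) ⊆ insert v (A ∪ B) := by
        intro x _
        by_cases hx : x = v
        · simp [hx]
        · by_cases hadj : C.Adj v x
          · simp [hA, hadj]
          · simp [hB, hx, hadj]
      have hcards : M1 + M2 ≤ A.card + B.card := by
        have h1' := Finset.card_le_card hsub
        have h2' := Finset.card_insert_le v (A ∪ B)
        have h3' := Finset.card_union_le A B
        rw [Finset.card_univ] at h1'
        omega
      have hAv : v ∉ A := by simp [hA]
      have hBv : v ∉ B := by simp [hB]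
      rcases le_or_gt M1 A.card with hA1 | hA2
      · have := h1 ↥A (C.comap (fun x : ↥A => (x : V)))
          (by rw [Fintype.card_coe]; exact hA1)
        rcases this with ⟨S, hS, hadj⟩ | ⟨S, hS, hnadj⟩
        · refine Or.inl ⟨insert v (S.map ⟨Subtype.val, Subtype.val_injective⟩), ?_, ?_⟩
          · rw [Finset.card_insert_of_notMem, Finset.card_map, hS]
            simp only [Finset.mem_map, Function.Embedding.coeFn_mk]
            rintro ⟨a, _, ha⟩
            exact hAv (ha ▸ a.2)
          · intro x hx y hy hxy
            rw [Finset.mem_insert] at hx hy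
            have hmem : ∀ z, z ∈ S.map ⟨Subtype.val, Subtype.val_injective⟩ →
                z ∈ A := by
              rintro z hz
              simp only [Finset.mem_map, Function.Embedding.coeFn_mk] at hz
              obtain ⟨a, _, rfl⟩ := hz
              exact a.2
            have hAadj : ∀ z ∈ A, C.Adj v z := by
              intro z hz; rw [hA, Finset.mem_filter] at hz; exact hz.2
            rcases hx with rfl | hx
            · rcases hy with rfl | hy
              · exact absurd rfl hxy
              · exact hAadj _ (hmem _ hy)
            · rcases hy with rfl | hy
              · exact (hAadj _ (hmem _ hx)).symm
              · simp only [Finset.mem_map, Function.Embedding.coeFn_mk] at hx hy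
                obtain ⟨a, haS, rfl⟩ := hx
                obtain ⟨b, hbS, rfl⟩ := hy
                have hab : a ≠ b := fun habe => hxy (by rw [habe])
                exact hadj a haS b hbS hab
        · refine Or.inr ⟨S.map ⟨Subtype.val, Subtype.val_injective⟩, ?_, ?_⟩
          · rw [Finset.card_map, hS]
          · intro x hx y hy hxy
            simp only [Finset.mem_map, Function.Embedding.coeFn_mk] at hx hy
            obtain ⟨a, haS, rfl⟩ := hx
            obtain ⟨b, hbS, rfl⟩ := hy
            have hab : a ≠ b := fun habe => hxy (by rw [habe])
            exact hnadj a haS b hbS hab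
      · have hB2 : M2 ≤ B.card := by omega
        have := h2 ↥B (C.comap (fun x : ↥B => (x : V)))
          (by rw [Fintype.card_coe]; exact hB2)
        rcases this with ⟨S, hS, hadj⟩ | ⟨S, hS, hnadj⟩
        · refine Or.inl ⟨S.map ⟨Subtype.val, Subtype.val_injective⟩, ?_, ?_⟩
          · rw [Finset.card_map, hS]
          · intro x hx y hy hxy
            simp only [Finset.mem_map, Function.Embedding.coeFn_mk] at hx hy
            obtain ⟨a, haS, rfl⟩ := hx
            obtain ⟨b, hbS, rfl⟩ := hy
            have hab : a ≠ b := fun habe => hxy (by rw [habe])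
            exact hadj a haS b hbS hab
        · refine Or.inr ⟨insert v (S.map ⟨Subtype.val, Subtype.val_injective⟩), ?_, ?_⟩
          · rw [Finset.card_insert_of_notMem, Finset.card_map, hS]
            simp only [Finset.mem_map, Function.Embedding.coeFn_mk]
            rintro ⟨a, _, ha⟩
            exact hBv (ha ▸ a.2)
          · intro x hx y hy hxy
            rw [Finset.mem_insert] at hx hy
            have hmem : ∀ z, z ∈ S.map ⟨Subtype.val, Subtype.val_injective⟩ →
                z ∈ B := by
              rintro z hz
              simp only [Finset.mem_map, Function.Embedding.coeFn_mk] at hz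
              obtain ⟨a, _, rfl⟩ := hz
              exact a.2
            have hBadj : ∀ z ∈ B, ¬ C.Adj v z := by
              intro z hz; rw [hB, Finset.mem_filter] at hz; exact hz.2.2
            rcases hx with rfl | hx
            · rcases hy with rfl | hy
              · exact absurd rfl hxy
              · exact hBadj _ (hmem _ hy)
            · rcases hy with rfl | hy
              · exact fun hc => hBadj _ (hmem _ hx) hc.symm
              · simp only [Finset.mem_map, Function.Embedding.coeFn_mk] at hx hy
                obtain ⟨a, haS, rfl⟩ := hx
                obtain ⟨b, hbS, rfl⟩ := hy
                have hab : a ≠ b := fun habe => hxy (by rw [habe])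
                exact hnadj a haS b hbS hab

lemma contains_of_clique {α : Type*} {G : SimpleGraph α} {n : ℕ} {S : Finset α}
    (hcard : S.card = 2*n + 1)
    (hadj : ∀ x ∈ S, ∀ y ∈ S, x ≠ y → G.Adj x y) :
    Contains G (fan n) := by
  classical
  have hce : Fintype.card (Fin 1 ⊕ Fin n × Fin 2) = Fintype.card ↥S := by
    simp only [Fintype.card_sum, Fintype.card_prod, Fintype.card_fin, Fintype.card_coe,
      hcard]
    omega
  obtain e := Fintype.equivOfCardEq hce
  refine ⟨⟨fun x => (e x : α), ?_⟩, ?_⟩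
  · intro a b hab
    have hne : a ≠ b := hab.ne
    have hne2 : (e a : α) ≠ (e b : α) :=
      fun hc => hne (e.injective (Subtype.val_injective hc))
    exact hadj _ (e a).2 _ (e b).2 hne2
  · intro a b hab
    exact e.injective (Subtype.val_injective hab)

end Aux

theorem stmt_16 (n : ℕ) (hn : 4 ≤ n) :
    (9 * n + 1) / 2 ≤ ramseyNumber (fan n) (fan n) := by
  classical
  have hkey : ∀ k : ℕ, RamseyProp k (fan n) (fan n) → 4*n + (n-1)/2 + 1 ≤ k := by
    intro k hR
    by_contra hlt
    push_neg at hlt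
    rcases hR (Cg n k) with hc | hc
    · exact noRed n k hn (by omega) hc
    · exact noBlue n k hn (by omega) hc
  have hne : {N' | RamseyProp N' (fan n) (fan n)}.Nonempty := by
    obtain ⟨M, hM⟩ := ramsey_exists (2*n + 1) (2*n + 1)
    refine ⟨M, ?_⟩
    intro C
    rcases hM (Fin M) C (by simp) with ⟨S, hS, h⟩ | ⟨S, hS, h⟩
    · exact Or.inl (contains_of_clique hS h)
    · refine Or.inr (contains_of_clique hS ?_)
      intro x hx y hy hxy
      rw [SimpleGraph.compl_adj]
      exact ⟨hxy, h x hx y hy hxy⟩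
  have hle : 4*n + (n-1)/2 + 1 ≤ sInf {N' | RamseyProp N' (fan n) (fan n)} :=
    le_csInf hne (fun b hb => hkey b hb)
  have heq : (9 * n + 1) / 2 = 4*n + (n-1)/2 + 1 := by omega
  rw [heq]
  exact hle
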